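/- For every L₀ > 0, the integral q(L₀) = ∫_ℝ (1 + u²) e^{−u²/2} / ( Φ(u + L₀) − Φ(u − L₀) ) du is finite, where Φ denotes the standard normal cumulative distribution function Φ(t) = (2π)^{−1/2} ∫_{−∞}^{t} e^{−x²/2} dx. -/

import Mathlib

open MeasureTheory

/-- The standard normal cumulative distribution function. -/
noncomputable def stdNormalCDF (t : ℝ) : ℝ :=
  ∫ x in Set.Iic t, (Real.sqrt (2 * Real.pi))⁻¹ * Real.exp (-x ^ 2 / 2)

noncomputable def gaussPDF (x : ℝ) : ℝ := (Real.sqrt (2 * Real.pi))⁻¹ * Real.exp (-x ^ 2 / 2)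

lemma gaussPDF_pos (x : ℝ) : 0 < gaussPDF x := by
  unfold gaussPDF
  have h2π : 0 < Real.sqrt (2 * Real.pi) := Real.sqrt_pos.mpr (by positivity)
  positivity

lemma gaussPDF_continuous : Continuous gaussPDF := by
  unfold gaussPDF; fun_prop

lemma gaussPDF_integrable : Integrable gaussPDF := by
  have h : gaussPDF = fun x => (Real.sqrt (2 * Real.pi))⁻¹ * Real.exp (-(1/2 : ℝ) * x ^ 2) := by
    funext x; unfold gaussPDF
    rw [show (-x ^ 2 / 2 : ℝ) = -(1/2) * x ^ 2 from by ring]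
  rw [h]
  exact (integrable_exp_neg_mul_sq (by norm_num)).const_mul _

lemma gaussPDF_mono {x y : ℝ} (h : x ^ 2 ≤ y ^ 2) : gaussPDF y ≤ gaussPDF x := by
  unfold gaussPDF
  have : Real.exp (-y^2/2) ≤ Real.exp (-x^2/2) := Real.exp_le_exp.mpr (by linarith)
  exact mul_le_mul_of_nonneg_left this (by positivity)

lemma cdf_sub (a b : ℝ) :
    stdNormalCDF b - stdNormalCDF a = ∫ x in a..b, gaussPDF x :=
  intervalIntegral.integral_Iic_sub_Iic gaussPDF_integrable.integrableOn
    gaussPDF_integrable.integrableOn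

lemma cdf_continuous : Continuous stdNormalCDF := by
  have h : stdNormalCDF = fun t => stdNormalCDF 0 + ∫ x in (0:ℝ)..t, gaussPDF x := by
    funext t
    have := cdf_sub 0 t
    linarith
  rw [h]
  exact continuous_const.add
    (intervalIntegral.continuous_primitive (fun a b => gaussPDF_integrable.intervalIntegrable) 0)

lemma cdf_diff_ge (L₀ u c d m : ℝ) (h1 : u - L₀ ≤ c) (h2 : c ≤ d) (h3 : d ≤ u + L₀)
    (hm : ∀ x ∈ Set.Ioc c d, m ≤ gaussPDF x) :
    m * (d - c) ≤ stdNormalCDF (u + L₀) - stdNormalCDF (u - L₀) := by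
  rw [cdf_sub, intervalIntegral.integral_of_le (by linarith)]
  have step1 : m * (d - c) ≤ ∫ x in Set.Ioc c d, gaussPDF x := by
    have h := setIntegral_ge_of_const_le (μ := volume) measurableSet_Ioc
      measure_Ioc_lt_top.ne hm gaussPDF_integrable.integrableOn
    rw [Real.volume_real_Ioc_of_le h2, smul_eq_mul] at h; linarith
  have step2 : ∫ x in Set.Ioc c d, gaussPDF x ≤ ∫ x in Set.Ioc (u - L₀) (u + L₀), gaussPDF x :=
    setIntegral_mono_set gaussPDF_integrable.integrableOn
      (Filter.Eventually.of_forall fun x => (gaussPDF_pos x).le)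
      (HasSubset.Subset.eventuallyLE (Set.Ioc_subset_Ioc h1 h3))
  linarith

lemma cdf_diff_pos (L₀ : ℝ) (hL₀ : 0 < L₀) (u : ℝ) :
    0 < stdNormalCDF (u + L₀) - stdNormalCDF (u - L₀) := by
  have h := cdf_diff_ge L₀ u u (u + L₀) (gaussPDF (|u| + L₀)) (by linarith) (by linarith) le_rfl ?_
  · have := gaussPDF_pos (|u| + L₀)
    nlinarith
  · intro x hx
    apply gaussPDF_mono
    have ha := neg_abs_le u
    have hb := le_abs_self u
    have h1 : -(|u| + L₀) ≤ x := by linarith [hx.1]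
    have h2 : x ≤ |u| + L₀ := by linarith [hx.2]
    exact sq_le_sq' h1 h2

lemma cdf_diff_ge_tail (L₀ : ℝ) (hL₀ : 0 < L₀) (u : ℝ) (hu : L₀ ≤ |u|) :
    gaussPDF (|u| - L₀/2) * (L₀/2) ≤ stdNormalCDF (u + L₀) - stdNormalCDF (u - L₀) := by
  rcases le_total 0 u with h | h
  · rw [abs_of_nonneg h] at hu ⊢
    have key := cdf_diff_ge L₀ u (u - L₀) (u - L₀/2) (gaussPDF (u - L₀/2)) le_rfl
      (by linarith) (by linarith) ?_
    · calc gaussPDF (u - L₀/2) * (L₀/2)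
          = gaussPDF (u - L₀/2) * ((u - L₀/2) - (u - L₀)) := by ring_nf
        _ ≤ _ := key
    · intro x hx
      apply gaussPDF_mono
      have h1 : -(u - L₀/2) ≤ x := by linarith [hx.1]
      have h2 : x ≤ u - L₀/2 := hx.2
      exact sq_le_sq' h1 h2
  · rw [abs_of_nonpos h] at hu ⊢
    have key := cdf_diff_ge L₀ u (u + L₀/2) (u + L₀) (gaussPDF (u + L₀/2)) (by linarith)
      (by linarith) le_rfl ?_
    · have heven : gaussPDF (-u - L₀/2) = gaussPDF (u + L₀/2) := by
        unfold gaussPDF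
        congr 1
        congr 1
        ring
      calc gaussPDF (-u - L₀/2) * (L₀/2)
          = gaussPDF (u + L₀/2) * ((u + L₀) - (u + L₀/2)) := by rw [heven]; ring_nf
        _ ≤ _ := key
    · intro x hx
      apply gaussPDF_mono
      have h1 : -(-(u + L₀/2)) ≤ x := by linarith [hx.1]
      have h2 : x ≤ -(u + L₀/2) := by linarith [hx.2]
      have := sq_le_sq' h1 h2
      rwa [neg_sq] at this

lemma poly_le_exp (L₀ : ℝ) (hL₀ : 0 < L₀) (s : ℝ) (hs : 1 ≤ s) (u : ℝ) (hus : u^2 = s^2) :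
    1 + u ^ 2 ≤ (1 + 1728/L₀^3) * Real.exp ((L₀/4) * s) := by
  have hepos : (0:ℝ) < Real.exp ((L₀/4) * s) := Real.exp_pos _
  have h1 : (1:ℝ) ≤ Real.exp ((L₀/4) * s) := by
    rw [Real.one_le_exp_iff]
    positivity
  have e1 : (L₀/12) * s ≤ Real.exp ((L₀/12) * s) := by
    have := Real.add_one_le_exp ((L₀/12) * s)
    linarith
  have e2 : ((L₀/12) * s)^3 ≤ Real.exp ((L₀/12) * s)^3 := by
    apply pow_le_pow_left₀ (by positivity) e1
  have e3 : Real.exp ((L₀/12) * s)^3 = Real.exp ((L₀/4) * s) := by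
    rw [← Real.exp_nat_mul]
    congr 1
    push_cast
    ring
  have hs2 : u^2 ≤ s^3 := by rw [hus]; nlinarith
  have hc : s^3 ≤ (1728/L₀^3) * Real.exp ((L₀/4) * s) := by
    have : ((L₀/12) * s)^3 = L₀^3/1728 * s^3 := by ring
    rw [e3, this] at e2
    rw [div_mul_eq_mul_div, le_div_iff₀ (by positivity)] at *
    nlinarith [e2]
  nlinarith

lemma exp_mul_integrableOn_Iic {b : ℝ} (c : ℝ) (hb : 0 < b) :
    IntegrableOn (fun x => Real.exp (b * x)) (Set.Iic c) := by
  have h := exp_neg_integrableOn_Ioi (-c) hb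
  rw [← integrable_indicator_iff measurableSet_Ioi] at h
  have h2 := h.comp_neg
  have heq : (fun x : ℝ => Set.indicator (Set.Ioi (-c)) (fun y => Real.exp (-b * y)) (-x))
      = Set.indicator (Set.Iio c) (fun y => Real.exp (b * y)) := by
    funext x
    by_cases hx : x < c
    · rw [Set.indicator_of_mem (by simpa using hx), Set.indicator_of_mem (Set.mem_Iio.mpr hx)]
      congr 1
      ring
    · rw [Set.indicator_of_notMem (by simpa using hx), Set.indicator_of_notMem (fun hmem => hx (Set.mem_Iio.mp hmem))]
  rw [heq] at h2
  rw [integrableOn_Iic_iff_integrableOn_Iio,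
    ← integrable_indicator_iff measurableSet_Iio]
  exact h2

lemma f_tail_bound (L₀ : ℝ) (hL₀ : 0 < L₀) (u : ℝ) (hu : max 1 L₀ ≤ |u|) :
    (1 + u ^ 2) * Real.exp (-u ^ 2 / 2) /
        (stdNormalCDF (u + L₀) - stdNormalCDF (u - L₀))
      ≤ (1 + 1728/L₀^3) * (2/L₀) * Real.sqrt (2*Real.pi) * Real.exp (L₀^2/8) *
        Real.exp (-(L₀/4) * |u|) := by
  set s := |u| with hs
  have hs1 : 1 ≤ s := le_trans (le_max_left _ _) hu
  have hsL : L₀ ≤ s := le_trans (le_max_right _ _) hu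
  have hus : u^2 = s^2 := (sq_abs u).symm
  have hD := cdf_diff_ge_tail L₀ hL₀ u hsL
  have hDpos := cdf_diff_pos L₀ hL₀ u
  have hδpos : 0 < gaussPDF (s - L₀/2) * (L₀/2) := by
    have := gaussPDF_pos (s - L₀/2); positivity
  have hN : 0 ≤ (1 + u ^ 2) * Real.exp (-u ^ 2 / 2) := by positivity
  have step1 : (1 + u ^ 2) * Real.exp (-u ^ 2 / 2) /
        (stdNormalCDF (u + L₀) - stdNormalCDF (u - L₀))
      ≤ (1 + u ^ 2) * Real.exp (-u ^ 2 / 2) / (gaussPDF (s - L₀/2) * (L₀/2)) :=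
    div_le_div_of_nonneg_left hN hδpos hD
  have hsqrt : 0 < Real.sqrt (2 * Real.pi) := Real.sqrt_pos.mpr (by positivity)
  have hexp_eq : Real.exp (-u ^ 2 / 2) / (gaussPDF (s - L₀/2) * (L₀/2))
      = (2/L₀) * Real.sqrt (2*Real.pi) * Real.exp (-(L₀/2) * s + L₀^2/8) := by
    unfold gaussPDF
    rw [div_eq_mul_inv, mul_inv, mul_inv, inv_inv]
    have hinv : (Real.exp (-(s - L₀/2) ^ 2 / 2))⁻¹ = Real.exp ((s - L₀/2) ^ 2 / 2) := by
      rw [← Real.exp_neg]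
      congr 1
      ring
    rw [hinv]
    have key : Real.exp (-u ^ 2 / 2) * Real.exp ((s - L₀/2) ^ 2 / 2)
        = Real.exp (-(L₀/2) * s + L₀^2/8) := by
      rw [← Real.exp_add]
      congr 1
      rw [hus]
      ring
    calc Real.exp (-u ^ 2 / 2) *
          (Real.sqrt (2 * Real.pi) * Real.exp ((s - L₀/2) ^ 2 / 2) * (L₀ / 2)⁻¹)
        = (2/L₀) * Real.sqrt (2*Real.pi) *
          (Real.exp (-u ^ 2 / 2) * Real.exp ((s - L₀/2) ^ 2 / 2)) := by
          rw [inv_div]; ring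
      _ = (2/L₀) * Real.sqrt (2*Real.pi) * Real.exp (-(L₀/2) * s + L₀^2/8) := by rw [key]
  have step2 : (1 + u ^ 2) * Real.exp (-u ^ 2 / 2) / (gaussPDF (s - L₀/2) * (L₀/2))
      = (1 + u ^ 2) * ((2/L₀) * Real.sqrt (2*Real.pi) * Real.exp (-(L₀/2) * s + L₀^2/8)) := by
    rw [← hexp_eq]
    ring
  have hpoly := poly_le_exp L₀ hL₀ s hs1 u hus
  have step3 : (1 + u ^ 2) * ((2/L₀) * Real.sqrt (2*Real.pi) * Real.exp (-(L₀/2) * s + L₀^2/8))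
      ≤ ((1 + 1728/L₀^3) * Real.exp ((L₀/4) * s)) *
        ((2/L₀) * Real.sqrt (2*Real.pi) * Real.exp (-(L₀/2) * s + L₀^2/8)) := by
    apply mul_le_mul_of_nonneg_right hpoly
    positivity
  have step4 : ((1 + 1728/L₀^3) * Real.exp ((L₀/4) * s)) *
        ((2/L₀) * Real.sqrt (2*Real.pi) * Real.exp (-(L₀/2) * s + L₀^2/8))
      = (1 + 1728/L₀^3) * (2/L₀) * Real.sqrt (2*Real.pi) * Real.exp (L₀^2/8) *
        Real.exp (-(L₀/4) * s) := by
    have hcomb : Real.exp ((L₀/4) * s) * Real.exp (-(L₀/2) * s + L₀^2/8)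
        = Real.exp (L₀^2/8) * Real.exp (-(L₀/4) * s) := by
      rw [← Real.exp_add, ← Real.exp_add]
      congr 1
      ring
    calc ((1 + 1728/L₀^3) * Real.exp ((L₀/4) * s)) *
          ((2/L₀) * Real.sqrt (2*Real.pi) * Real.exp (-(L₀/2) * s + L₀^2/8))
        = (1 + 1728/L₀^3) * (2/L₀) * Real.sqrt (2*Real.pi) *
          (Real.exp ((L₀/4) * s) * Real.exp (-(L₀/2) * s + L₀^2/8)) := by ring
      _ = (1 + 1728/L₀^3) * (2/L₀) * Real.sqrt (2*Real.pi) *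
          (Real.exp (L₀^2/8) * Real.exp (-(L₀/4) * s)) := by rw [hcomb]
      _ = _ := by ring
  calc (1 + u ^ 2) * Real.exp (-u ^ 2 / 2) /
        (stdNormalCDF (u + L₀) - stdNormalCDF (u - L₀))
      ≤ (1 + u ^ 2) * Real.exp (-u ^ 2 / 2) / (gaussPDF (s - L₀/2) * (L₀/2)) := step1
    _ = (1 + u ^ 2) * ((2/L₀) * Real.sqrt (2*Real.pi) * Real.exp (-(L₀/2) * s + L₀^2/8)) := step2
    _ ≤ _ := step3
    _ = _ := step4

theorem q_finite (L₀ : ℝ) (hL₀ : 0 < L₀) :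
    Integrable (fun u : ℝ =>
      (1 + u ^ 2) * Real.exp (-u ^ 2 / 2) /
        (stdNormalCDF (u + L₀) - stdNormalCDF (u - L₀))) := by
  set f : ℝ → ℝ := fun u =>
      (1 + u ^ 2) * Real.exp (-u ^ 2 / 2) /
        (stdNormalCDF (u + L₀) - stdNormalCDF (u - L₀)) with hf
  set C : ℝ := (1 + 1728/L₀^3) * (2/L₀) * Real.sqrt (2*Real.pi) * Real.exp (L₀^2/8) with hC
  have hsqrt : 0 < Real.sqrt (2 * Real.pi) := Real.sqrt_pos.mpr (by positivity)
  have hCpos : 0 < C := by rw [hC]; positivity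
  set A : ℝ := max 1 L₀ with hA
  have hcont : Continuous f := by
    apply Continuous.div
    · fun_prop
    · exact (cdf_continuous.comp (by fun_prop)).sub (cdf_continuous.comp (by fun_prop))
    · intro u; exact (cdf_diff_pos L₀ hL₀ u).ne'
  have hfnonneg : ∀ u, 0 ≤ f u := fun u =>
    div_nonneg (by positivity) (cdf_diff_pos L₀ hL₀ u).le
  rw [← integrableOn_univ]
  have hcover : (Set.univ : Set ℝ) ⊆ Set.Iic (-A) ∪ (Set.Icc (-A) A ∪ Set.Ici A) := by
    intro x _
    rcases le_total x (-A) with h | h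
    · exact Or.inl h
    · rcases le_total x A with h2 | h2
      · exact Or.inr (Or.inl ⟨(by linarith), h2⟩)
      · exact Or.inr (Or.inr h2)
  apply IntegrableOn.mono_set _ hcover
  apply IntegrableOn.union
  · -- left tail
    have hg : IntegrableOn (fun u => C * Real.exp ((L₀/4) * u)) (Set.Iic (-A)) :=
      (exp_mul_integrableOn_Iic (-A) (by positivity)).const_mul C
    apply Integrable.mono hg hcont.aestronglyMeasurable.restrict
    rw [ae_restrict_iff' measurableSet_Iic]
    apply Filter.Eventually.of_forall
    intro u hu
    have huA : u ≤ -A := hu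
    have hA1 : (1:ℝ) ≤ A := le_max_left _ _
    have habs : |u| = -u := abs_of_nonpos (by linarith)
    have hbound := f_tail_bound L₀ hL₀ u (by rw [habs]; linarith)
    rw [habs] at hbound
    rw [Real.norm_eq_abs, Real.norm_eq_abs, abs_of_nonneg (hfnonneg u),
      abs_of_nonneg (by positivity)]
    calc f u ≤ C * Real.exp (-(L₀/4) * -u) := hbound
      _ = C * Real.exp ((L₀/4) * u) := by congr 1; ring_nf
  apply IntegrableOn.union
  · exact hcont.integrableOn_Icc
  · -- right tail
    have hg : IntegrableOn (fun u => C * Real.exp (-(L₀/4) * u)) (Set.Ici A) :=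
      Iff.mpr integrableOn_Ici_iff_integrableOn_Ioi
        ((exp_neg_integrableOn_Ioi A (by positivity)).const_mul C)
    apply Integrable.mono hg hcont.aestronglyMeasurable.restrict
    rw [ae_restrict_iff' measurableSet_Ici]
    apply Filter.Eventually.of_forall
    intro u hu
    have huA : A ≤ u := hu
    have hA1 : (1:ℝ) ≤ A := le_max_left _ _
    have habs : |u| = u := abs_of_nonneg (by linarith)
    have hbound := f_tail_bound L₀ hL₀ u (by rw [habs]; linarith)
    rw [habs] at hbound
    rw [Real.norm_eq_abs, Real.norm_eq_abs, abs_of_nonneg (hfnonneg u),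
      abs_of_nonneg (by positivity)]
    exact hbound
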